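/- arXiv:1906.09747 — 3 statements merged into one kernel-verified Lean document; each statement's English description precedes it below -/
import Mathlib

section
/- Let a, b, c ∈ ℂ with c not a nonpositive integer and Re(a+b−c) < 0. Then the hypergeometric series ∑_{p=0}^∞ (a)^(p)(b)^(p)/((c)^(p) p!) · z^p converges absolutely for every z on the unit circle |z| = 1. -/
open Nat

private lemma asc_eval_prod (x : ℂ) (n : ℕ) :
    (ascPochhammer ℂ n).eval x = ∏ j ∈ Finset.range n, (x + j) := by
  induction n with
  | zero => simp
  | succ n ih =>
    rw [ascPochhammer_succ_right, Polynomial.eval_mul, ih, Finset.prod_range_succ]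
    simp

private lemma key_gamma (x : ℂ) (hx : ∀ m : ℕ, x + m ≠ 0) (p : ℕ) (hp : 0 < p) :
    0 < ‖Complex.GammaSeq x p‖ ∧
    ‖(ascPochhammer ℂ (p + 1)).eval x‖ * ‖Complex.GammaSeq x p‖
      = (p : ℝ) ^ x.re * (p ! : ℝ) := by
  have hP : (∏ j ∈ Finset.range (p + 1), (x + (j : ℂ))) ≠ 0 :=
    Finset.prod_ne_zero_iff.mpr fun j _ => hx j
  have hPn : ‖∏ j ∈ Finset.range (p + 1), (x + (j : ℂ))‖ ≠ 0 := norm_ne_zero_iff.mpr hP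
  have hp0 : (0 : ℝ) < (p : ℝ) := by exact_mod_cast hp
  have h1 : ‖Complex.GammaSeq x p‖
      = (p : ℝ) ^ x.re * (p ! : ℝ) / ‖∏ j ∈ Finset.range (p + 1), (x + (j : ℂ))‖ := by
    rw [Complex.GammaSeq, norm_div, norm_mul]
    congr 2
    · rw [show ((p : ℂ)) = (((p : ℝ) : ℂ)) by norm_cast,
        Complex.norm_cpow_eq_rpow_re_of_pos hp0]
    · simp
  constructor
  · rw [h1]
    exact div_pos (by positivity) (norm_pos_iff.mpr hP)
  · rw [asc_eval_prod, h1, mul_comm, div_mul_cancel₀ _ hPn]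

private lemma frac_identity (A B C f F Ga Gb Gc q : ℝ) (hGa : Ga ≠ 0) (hGb : Gb ≠ 0)
    (hC : C ≠ 0) (hf : f ≠ 0) (hq : q ≠ 0) (hF : F = q * f) :
    (A * f / Ga) * (B * f / Gb) / ((C * f / Gc) * F)
      = (A * B / C) / q * (Gc / (Ga * Gb)) := by
  subst hF; field_simp

theorem hypergeometric_abs_summable_on_circle (a b c : ℂ)
    (hc : ∀ m : ℕ, c ≠ -(m : ℂ)) (hre : (a + b - c).re < 0)
    (z : ℂ) (hz : ‖z‖ = 1) :
    Summable (fun p : ℕ =>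
      ‖Polynomial.eval a (ascPochhammer ℂ p) * Polynomial.eval b (ascPochhammer ℂ p) /
        (Polynomial.eval c (ascPochhammer ℂ p) * (p ! : ℂ)) * z ^ p‖) := by
  by_cases hab : ∃ m : ℕ, a + m = 0 ∨ b + m = 0
  · obtain ⟨m, hm⟩ := hab
    apply summable_of_ne_finset_zero (s := Finset.range (m + 1))
    intro p hp
    simp only [Finset.mem_range, not_lt] at hp
    have hmem : m ∈ Finset.range p := Finset.mem_range.mpr (by omega)
    rcases hm with h | h
    · have h0 : (ascPochhammer ℂ p).eval a = 0 := by
        rw [asc_eval_prod]; exact Finset.prod_eq_zero hmem h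
      simp [h0]
    · have h0 : (ascPochhammer ℂ p).eval b = 0 := by
        rw [asc_eval_prod]; exact Finset.prod_eq_zero hmem h
      simp [h0]
  · push_neg at hab
    have ha : ∀ m : ℕ, a + m ≠ 0 := fun m => (hab m).1
    have hb : ∀ m : ℕ, b + m ≠ 0 := fun m => (hab m).2
    have hc' : ∀ m : ℕ, c + m ≠ 0 := fun m h => hc m (eq_neg_of_add_eq_zero_left h)
    have haG : Complex.Gamma a ≠ 0 :=
      Complex.Gamma_ne_zero fun m h => ha m (by rw [h]; ring)
    have hbG : Complex.Gamma b ≠ 0 :=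
      Complex.Gamma_ne_zero fun m h => hb m (by rw [h]; ring)
    set L : ℝ := ‖Complex.Gamma c‖ / (‖Complex.Gamma a‖ * ‖Complex.Gamma b‖) with hL
    have hT : Filter.Tendsto
        (fun p : ℕ => ‖Complex.GammaSeq c p‖ /
          (‖Complex.GammaSeq a p‖ * ‖Complex.GammaSeq b p‖))
        Filter.atTop (nhds L) :=
      ((Complex.GammaSeq_tendsto_Gamma c).norm.div
        (((Complex.GammaSeq_tendsto_Gamma a).norm.mul
          (Complex.GammaSeq_tendsto_Gamma b).norm))
        (mul_ne_zero (norm_ne_zero_iff.mpr haG) (norm_ne_zero_iff.mpr hbG)))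
    have hL0 : 0 ≤ L := by positivity
    have hev : ∀ᶠ p in Filter.atTop,
        ‖Complex.GammaSeq c p‖ /
          (‖Complex.GammaSeq a p‖ * ‖Complex.GammaSeq b p‖) < L + 1 :=
      hT.eventually_lt_const (by linarith)
    rw [← summable_nat_add_iff 1]
    apply summable_of_isBigO_nat
      (g := fun p : ℕ => (p : ℝ) ^ ((a + b - c).re - 1))
      (Real.summable_nat_rpow.mpr (by linarith))
    rw [Asymptotics.isBigO_iff]
    refine ⟨L + 1, ?_⟩
    filter_upwards [hev, Filter.eventually_ge_atTop 1] with p hp hp1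
    have hp0 : (0 : ℝ) < (p : ℝ) := by exact_mod_cast hp1
    have hp0' : 0 < p := hp1
    obtain ⟨ga, ka⟩ := key_gamma a ha p hp0'
    obtain ⟨gb, kb⟩ := key_gamma b hb p hp0'
    obtain ⟨gc, kc⟩ := key_gamma c hc' p hp0'
    have hPa : ‖(ascPochhammer ℂ (p + 1)).eval a‖
        = (p : ℝ) ^ a.re * (p ! : ℝ) / ‖Complex.GammaSeq a p‖ :=
      (eq_div_iff ga.ne').mpr ka
    have hPb : ‖(ascPochhammer ℂ (p + 1)).eval b‖
        = (p : ℝ) ^ b.re * (p ! : ℝ) / ‖Complex.GammaSeq b p‖ :=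
      (eq_div_iff gb.ne').mpr kb
    have hPc : ‖(ascPochhammer ℂ (p + 1)).eval c‖
        = (p : ℝ) ^ c.re * (p ! : ℝ) / ‖Complex.GammaSeq c p‖ :=
      (eq_div_iff gc.ne').mpr kc
    rw [norm_norm, norm_mul, norm_pow, hz, one_pow, mul_one, norm_div, norm_mul, norm_mul,
      hPa, hPb, hPc, Complex.norm_natCast,
      Real.norm_of_nonneg (Real.rpow_nonneg hp0.le _)]
    have hfac : (((p + 1)! : ℕ) : ℝ) = ((p : ℝ) + 1) * (p ! : ℝ) := by
      rw [Nat.factorial_succ]; push_cast; ring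
    have e1 : (p : ℝ) ^ a.re * (p : ℝ) ^ b.re / (p : ℝ) ^ c.re
        = (p : ℝ) ^ ((a + b - c).re) := by
      rw [← Real.rpow_add hp0, ← Real.rpow_sub hp0]
      simp [Complex.add_re, Complex.sub_re]
    have e2 : (p : ℝ) ^ ((a + b - c).re - 1) = (p : ℝ) ^ ((a + b - c).re) / (p : ℝ) := by
      rw [Real.rpow_sub hp0, Real.rpow_one]
    have hfacpos : (0 : ℝ) < (p ! : ℝ) := by exact_mod_cast Nat.factorial_pos p
    have lhs_eq :
        ((p : ℝ) ^ a.re * (p ! : ℝ) / ‖Complex.GammaSeq a p‖) *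
          ((p : ℝ) ^ b.re * (p ! : ℝ) / ‖Complex.GammaSeq b p‖) /
          (((p : ℝ) ^ c.re * (p ! : ℝ) / ‖Complex.GammaSeq c p‖) * (((p + 1)! : ℕ) : ℝ))
        = (p : ℝ) ^ ((a + b - c).re) / ((p : ℝ) + 1) *
          (‖Complex.GammaSeq c p‖ /
            (‖Complex.GammaSeq a p‖ * ‖Complex.GammaSeq b p‖)) := by
      have hca : (p : ℝ) ^ c.re ≠ 0 := by positivity
      have hq : ((p : ℝ) + 1) ≠ 0 := by positivity
      rw [frac_identity _ _ _ _ _ _ _ _ _ ga.ne' gb.ne' hca hfacpos.ne' hq hfac, e1]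
    rw [lhs_eq, e2]
    have hden : ‖Complex.GammaSeq c p‖ /
        (‖Complex.GammaSeq a p‖ * ‖Complex.GammaSeq b p‖) ≤ L + 1 := hp.le
    calc (p : ℝ) ^ ((a + b - c).re) / ((p : ℝ) + 1) *
          (‖Complex.GammaSeq c p‖ /
            (‖Complex.GammaSeq a p‖ * ‖Complex.GammaSeq b p‖))
        ≤ (p : ℝ) ^ ((a + b - c).re) / ((p : ℝ) + 1) * (L + 1) :=
          mul_le_mul_of_nonneg_left hden (by positivity)
      _ ≤ (p : ℝ) ^ ((a + b - c).re) / (p : ℝ) * (L + 1) := by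
          have : (p : ℝ) ^ ((a + b - c).re) / ((p : ℝ) + 1)
              ≤ (p : ℝ) ^ ((a + b - c).re) / (p : ℝ) := by
            gcongr <;> linarith [Real.rpow_nonneg hp0.le ((a + b - c).re)]
          exact mul_le_mul_of_nonneg_right this (by linarith)
      _ = (L + 1) * ((p : ℝ) ^ ((a + b - c).re) / (p : ℝ)) := mul_comm _ _
end

section
/- Let a, b, c ∈ ℂ with c not a nonpositive integer and Re(a+b−c) ≥ 1. Then the hypergeometric series ∑_{p=0}^∞ (a)^(p)(b)^(p)/((c)^(p) p!) · z^p diverges for every z with |z| = 1 (assuming no term vanishes, i.e., a and b are not nonpositive integers). -/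
open Nat Filter

lemma ascPochhammer_eval_prod' (x : ℂ) (n : ℕ) :
    Polynomial.eval x (ascPochhammer ℂ n) = ∏ j ∈ Finset.range n, (x + j) := by
  induction n with
  | zero => simp
  | succ n ih => rw [ascPochhammer_succ_eval, ih, Finset.prod_range_succ]

lemma ascPochhammer_eval_ne_zero' {x : ℂ} (hx : ∀ m : ℕ, x ≠ -(m : ℂ)) (n : ℕ) :
    Polynomial.eval x (ascPochhammer ℂ n) ≠ 0 := by
  rw [ascPochhammer_eval_prod']
  exact Finset.prod_ne_zero_iff.2 fun j _ => by
    intro h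
    exact hx j (by linear_combination h)

lemma aux_id (A B C F x y w p q r s : ℂ) (hC : C ≠ 0)
    (hF : F ≠ 0) (hw : w ≠ 0) (hp : p ≠ 0) (hq : q ≠ 0)
    (hrel : s * p * q = r) :
    (r * F / (C * w)) / ((p * F / (A * x)) * (q * F / (B * y))) =
      A * B / (C * F) * (x * y * s / w) := by
  rw [← hrel]; field_simp

lemma key_id (a b c : ℂ)
    (ha : ∀ m : ℕ, a ≠ -(m : ℂ)) (hb : ∀ m : ℕ, b ≠ -(m : ℂ))
    (hc : ∀ m : ℕ, c ≠ -(m : ℂ)) (n : ℕ) (hn : 1 ≤ n) :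
    Complex.GammaSeq c n / (Complex.GammaSeq a n * Complex.GammaSeq b n) =
      (Polynomial.eval a (ascPochhammer ℂ n) * Polynomial.eval b (ascPochhammer ℂ n) /
        (Polynomial.eval c (ascPochhammer ℂ n) * (n ! : ℂ))) *
        ((a + n) * (b + n) * (n : ℂ) ^ (c - a - b) / (c + n)) := by
  have hn0 : (n : ℂ) ≠ 0 := Nat.cast_ne_zero.2 (by omega)
  have hPc := ascPochhammer_eval_ne_zero' hc n
  have hfac : ((n ! : ℕ) : ℂ) ≠ 0 := Nat.cast_ne_zero.2 n.factorial_ne_zero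
  have hcn : c + n ≠ 0 := fun h => hc n (by linear_combination h)
  have hpow : ∀ t : ℂ, (n : ℂ) ^ t ≠ 0 := fun t => by
    simp [Complex.cpow_eq_zero_iff, hn0]
  have hrel : (n : ℂ) ^ (c - a - b) * (n : ℂ) ^ a * (n : ℂ) ^ b = (n : ℂ) ^ c := by
    rw [← Complex.cpow_add _ _ hn0, ← Complex.cpow_add _ _ hn0]
    ring_nf
  have hG : ∀ x : ℂ, Complex.GammaSeq x n =
      (n : ℂ) ^ x * (n ! : ℂ) / (Polynomial.eval x (ascPochhammer ℂ n) * (x + n)) := by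
    intro x
    rw [Complex.GammaSeq, ← ascPochhammer_eval_prod', ascPochhammer_succ_eval]
  rw [hG, hG, hG]
  exact aux_id _ _ _ _ _ _ _ _ _ _ _ hPc hfac hcn (hpow a) (hpow b) hrel

theorem hypergeometric_diverges_on_circle (a b c : ℂ)
    (ha : ∀ m : ℕ, a ≠ -(m : ℂ)) (hb : ∀ m : ℕ, b ≠ -(m : ℂ))
    (hc : ∀ m : ℕ, c ≠ -(m : ℂ)) (hre : 1 ≤ (a + b - c).re)
    (z : ℂ) (hz : ‖z‖ = 1) :
    ¬ Tendsto (fun p : ℕ =>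
      Polynomial.eval a (ascPochhammer ℂ p) * Polynomial.eval b (ascPochhammer ℂ p) /
        (Polynomial.eval c (ascPochhammer ℂ p) * (p ! : ℂ)) * z ^ p) atTop (nhds 0) := by
  intro h
  set T : ℕ → ℂ := fun p =>
    Polynomial.eval a (ascPochhammer ℂ p) * Polynomial.eval b (ascPochhammer ℂ p) /
      (Polynomial.eval c (ascPochhammer ℂ p) * (p ! : ℂ)) with hT
  have hGa := Complex.Gamma_ne_zero ha
  have hGb := Complex.Gamma_ne_zero hb
  have hGc := Complex.Gamma_ne_zero hc
  have hU : Tendsto (fun n => Complex.GammaSeq c n / (Complex.GammaSeq a n * Complex.GammaSeq b n))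
      atTop (nhds (Complex.Gamma c / (Complex.Gamma a * Complex.Gamma b))) :=
    (Complex.GammaSeq_tendsto_Gamma c).div
      ((Complex.GammaSeq_tendsto_Gamma a).mul (Complex.GammaSeq_tendsto_Gamma b))
      (mul_ne_zero hGa hGb)
  have hL : Complex.Gamma c / (Complex.Gamma a * Complex.Gamma b) ≠ 0 :=
    div_ne_zero hGc (mul_ne_zero hGa hGb)
  -- ‖T n‖ → 0
  have hTnorm : Tendsto (fun n => ‖T n‖) atTop (nhds 0) := by
    have := h.norm
    simp only [norm_zero] at this
    convert this using 2 with n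
    rw [norm_mul, norm_pow, hz, one_pow, mul_one]
  -- choose N
  obtain ⟨N, hN⟩ := exists_nat_ge (max 1 (max (2 * ‖c‖) (max ‖a‖ ‖b‖)))
  have hN1 : (1 : ℝ) ≤ N := le_trans (le_max_left _ _) hN
  -- eventual bound
  have hbound : ∀ᶠ n : ℕ in atTop,
      ‖Complex.GammaSeq c n / (Complex.GammaSeq a n * Complex.GammaSeq b n)‖ ≤ 8 * ‖T n‖ := by
    filter_upwards [eventually_ge_atTop N] with n hn
    have hn1 : 1 ≤ n := by
      have : (1 : ℝ) ≤ (n : ℝ) := le_trans hN1 (Nat.cast_le.2 hn)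
      exact_mod_cast this
    have hnR : (1 : ℝ) ≤ (n : ℝ) := by exact_mod_cast hn1
    have hnpos : (0 : ℝ) < n := lt_of_lt_of_le one_pos hnR
    have hNn : (N : ℝ) ≤ n := by exact_mod_cast hn
    have hca : 2 * ‖c‖ ≤ (n : ℝ) :=
      le_trans (le_trans (le_max_left _ _) (le_max_right _ _)) (le_trans hN hNn)
    have haa : ‖a‖ ≤ (n : ℝ) :=
      le_trans (le_trans (le_trans (le_max_left _ _) (le_max_right _ _)) (le_max_right _ _))
        (le_trans hN hNn)
    have hbb : ‖b‖ ≤ (n : ℝ) :=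
      le_trans (le_trans (le_trans (le_max_right _ _) (le_max_right _ _)) (le_max_right _ _))
        (le_trans hN hNn)
    rw [key_id a b c ha hb hc n hn1, norm_mul]
    rw [mul_comm (8 : ℝ)]
    apply mul_le_mul_of_nonneg_left _ (norm_nonneg _)
    -- bound the factor
    have h1 : ‖a + (n : ℂ)‖ ≤ 2 * n := by
      calc ‖a + (n : ℂ)‖ ≤ ‖a‖ + ‖(n : ℂ)‖ := norm_add_le _ _
        _ = ‖a‖ + n := by rw [Complex.norm_natCast]
        _ ≤ n + n := by linarith
        _ = 2 * n := by ring
    have h2 : ‖b + (n : ℂ)‖ ≤ 2 * n := by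
      calc ‖b + (n : ℂ)‖ ≤ ‖b‖ + ‖(n : ℂ)‖ := norm_add_le _ _
        _ = ‖b‖ + n := by rw [Complex.norm_natCast]
        _ ≤ n + n := by linarith
        _ = 2 * n := by ring
    have h3 : ‖(n : ℂ) ^ (c - a - b)‖ ≤ ((n : ℝ))⁻¹ := by
      rw [Complex.norm_natCast_cpow_of_pos (by omega)]
      calc (n : ℝ) ^ (c - a - b).re ≤ (n : ℝ) ^ (-1 : ℝ) := by
            apply Real.rpow_le_rpow_of_exponent_le hnR
            simp only [Complex.sub_re, Complex.add_re] at hre ⊢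
            linarith
        _ = ((n : ℝ))⁻¹ := Real.rpow_neg_one _
    have h4 : (n : ℝ) / 2 ≤ ‖c + (n : ℂ)‖ := by
      have h' := norm_add_le ((n : ℂ) + c) (-c)
      simp only [add_neg_cancel_right, norm_neg, Complex.norm_natCast] at h'
      have he : ‖c + (n : ℂ)‖ = ‖(n : ℂ) + c‖ := by rw [add_comm]
      rw [he]
      linarith
    calc ‖(a + n) * (b + n) * (n : ℂ) ^ (c - a - b) / (c + n)‖
        = ‖a + (n : ℂ)‖ * ‖b + (n : ℂ)‖ * ‖(n : ℂ) ^ (c - a - b)‖ / ‖c + (n : ℂ)‖ := by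
          rw [norm_div, norm_mul, norm_mul]
      _ ≤ (2 * n) * (2 * n) * ((n : ℝ))⁻¹ / ((n : ℝ) / 2) := by
          gcongr <;> first | positivity | exact norm_nonneg _
      _ = 8 := by field_simp; ring
  -- squeeze
  have hsq : Tendsto (fun n => ‖Complex.GammaSeq c n /
      (Complex.GammaSeq a n * Complex.GammaSeq b n)‖) atTop (nhds 0) := by
    apply squeeze_zero' (Eventually.of_forall fun n => norm_nonneg _) hbound
    simpa using hTnorm.const_mul (8 : ℝ)
  exact hL (norm_eq_zero.1 (tendsto_nhds_unique hU.norm hsq))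
end

section
/- Let a, b, c ∈ ℂ with c not a nonpositive integer, and let z ∈ ℂ with |z| < 1 and |z/(z−1)| < 1. Then F(a,b;c;z) = (1−z)^{−a} F(a, c−b; c; z/(z−1)), where F is the Gauss hypergeometric series and (1−z)^{−a} is the principal branch. -/
open Nat

noncomputable def hyperSeries (a b c z : ℂ) : ℂ :=
  ∑' p : ℕ, Polynomial.eval a (ascPochhammer ℂ p) * Polynomial.eval b (ascPochhammer ℂ p) /
    (Polynomial.eval c (ascPochhammer ℂ p) * (p ! : ℂ)) * z ^ p

open Nat Filter Polynomial

noncomputable def asc (x : ℂ) (p : ℕ) : ℂ := Polynomial.eval x (ascPochhammer ℂ p)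

lemma asc_zero (x : ℂ) : asc x 0 = 1 := by simp [asc]

lemma asc_succ (x : ℂ) (p : ℕ) : asc x (p + 1) = asc x p * (x + p) := by
  simp [asc, ascPochhammer_succ_eval]

lemma asc_succ_left (x : ℂ) (p : ℕ) : asc x (p + 1) = x * asc (x + 1) p := by
  simp only [asc, ascPochhammer_succ_left, eval_mul, eval_X, X_mul, eval_comp, eval_add, eval_one]
  ring

lemma asc_add (x : ℂ) (n m : ℕ) : asc x (n + m) = asc x n * asc (x + n) m := by
  have := congrArg (Polynomial.eval x) (ascPochhammer_mul (S := ℂ) n m)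
  simpa [asc, eval_comp] using this.symm

lemma asc_ne_zero {c : ℂ} (hc : ∀ m : ℕ, c ≠ -(m : ℂ)) (p : ℕ) : asc c p ≠ 0 := by
  induction p with
  | zero => simp [asc_zero]
  | succ p ih =>
    rw [asc_succ]
    refine mul_ne_zero ih fun h => hc p ?_
    linear_combination h

lemma tendsto_shift_div (x y : ℂ) :
    Tendsto (fun p : ℕ => (x + p) / (y + p)) atTop (nhds 1) := by
  have hnorm : Tendsto (fun p : ℕ => ‖y + (p : ℂ)‖) atTop atTop := by
    apply tendsto_atTop_mono' _ _ (tendsto_atTop_add_const_right atTop (-‖y‖)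
      (tendsto_natCast_atTop_atTop (R := ℝ)))
    filter_upwards with p
    have h1 : ‖(p : ℂ)‖ ≤ ‖y + p‖ + ‖y‖ := by
      calc ‖(p : ℂ)‖ = ‖(y + p) + (-y)‖ := by ring_nf
        _ ≤ ‖y + p‖ + ‖-y‖ := norm_add_le _ _
        _ = ‖y + p‖ + ‖y‖ := by rw [norm_neg]
    have h2 : ‖(p : ℂ)‖ = (p : ℝ) := by simp
    simp only [ge_iff_le]
    linarith
  have hinv : Tendsto (fun p : ℕ => (x - y) / (y + p)) atTop (nhds 0) := by
    rw [tendsto_zero_iff_norm_tendsto_zero]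
    simp only [norm_div]
    have := (hnorm.inv_tendsto_atTop).const_mul ‖x - y‖
    simpa [div_eq_mul_inv, Pi.inv_def] using this
  have key : Tendsto (fun p : ℕ => 1 + (x - y) / (y + p)) atTop (nhds 1) := by
    simpa using tendsto_const_nhds.add hinv
  apply key.congr'
  have hev : ∀ᶠ p : ℕ in atTop, ‖y‖ < p := by
    have := tendsto_natCast_atTop_atTop (R := ℝ)
    exact this.eventually_gt_atTop ‖y‖
  filter_upwards [hev] with p hp
  have hyp : y + (p : ℂ) ≠ 0 := by
    intro h
    have : ‖y‖ = ‖(p:ℂ)‖ := by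
      rw [show y = -(p:ℂ) by linear_combination h]; simp
    simp at this
    simp [this] at hp
  field_simp
  ring

lemma summable_norm_of_ratio (co q : ℕ → ℂ)
    (hrec : ∀ p, co (p + 1) = q p * co p)
    (hq : Tendsto (fun p => ‖q p‖) atTop (nhds 1))
    {z : ℂ} (hz : ‖z‖ < 1) : Summable fun p => ‖co p * z ^ p‖ := by
  rcases eq_or_ne z 0 with rfl | hz0
  · apply summable_of_ne_finset_zero (s := {0})
    intro p hp
    have : p ≠ 0 := by simpa using hp
    simp [zero_pow this]
  · set r : ℝ := (1 + ‖z‖) / 2 with hr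
    have hz0' : 0 < ‖z‖ := norm_pos_iff.mpr hz0
    have hr1 : r < 1 := by rw [hr]; linarith
    have hzr : ‖z‖ < r := by rw [hr]; linarith
    have hrr : 1 < r / ‖z‖ := (one_lt_div hz0').mpr hzr
    apply summable_of_ratio_norm_eventually_le hr1
    filter_upwards [hq.eventually_lt_const hrr] with p hp
    have : ‖co (p+1) * z ^ (p+1)‖ = ‖q p‖ * ‖z‖ * ‖co p * z ^ p‖ := by
      rw [hrec p]
      simp [pow_succ, norm_mul]
      ring
    rw [Real.norm_of_nonneg (norm_nonneg _), Real.norm_of_nonneg (norm_nonneg _), this]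
    have h1 : ‖q p‖ * ‖z‖ ≤ r := by
      have := mul_le_mul_of_nonneg_right hp.le hz0'.le
      rwa [div_mul_cancel₀ r (ne_of_gt hz0')] at this
    exact mul_le_mul_of_nonneg_right h1 (norm_nonneg _)
-- ratio for hyper coefficients
lemma summable_hyper_norm (a b c : ℂ) (hc : ∀ m : ℕ, c ≠ -(m : ℂ)) {z : ℂ} (hz : ‖z‖ < 1) :
    Summable fun p => ‖asc a p * asc b p / (asc c p * (p ! : ℂ)) * z ^ p‖ := by
  apply summable_norm_of_ratio _ (fun p => (a + p) / (1 + p) * ((b + p) / (c + p))) _ _ hz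
  · intro p
    have h1 : asc c p ≠ 0 := asc_ne_zero hc p
    have h2 : (c + p) ≠ 0 := fun h => hc p (by linear_combination h)
    have h3 : ((p ! : ℂ)) ≠ 0 := by exact_mod_cast p.factorial_ne_zero
    have h4 : ((1 : ℂ) + p) ≠ 0 := by
      intro h
      have : ((p : ℂ) + 1) = 0 := by linear_combination h
      exact_mod_cast Nat.cast_add_one_ne_zero p this
    rw [asc_succ, asc_succ, asc_succ]
    have hfact : ((p + 1)! : ℂ) = (p ! : ℂ) * (1 + p) := by
      push_cast [Nat.factorial_succ]; ring
    rw [hfact]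
    field_simp
  · have h1 := tendsto_shift_div a 1
    have h2 := tendsto_shift_div b c
    have := (h1.mul h2).norm
    simpa using this

lemma summable_binom_norm (a : ℂ) {z : ℂ} (hz : ‖z‖ < 1) :
    Summable fun p => ‖asc a p / (p ! : ℂ) * z ^ p‖ := by
  apply summable_norm_of_ratio _ (fun p => (a + p) / (1 + p)) _ _ hz
  · intro p
    have h3 : ((p ! : ℂ)) ≠ 0 := by exact_mod_cast p.factorial_ne_zero
    have h4 : ((1 : ℂ) + p) ≠ 0 := by
      intro h
      have : ((p : ℂ) + 1) = 0 := by linear_combination h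
      exact_mod_cast Nat.cast_add_one_ne_zero p this
    rw [asc_succ]
    have hfact : ((p + 1)! : ℂ) = (p ! : ℂ) * (1 + p) := by
      push_cast [Nat.factorial_succ]; ring
    rw [hfact]
    field_simp
  · simpa using (tendsto_shift_div a 1).norm

-- shifted coefficients for derivative series
lemma summable_dbinom_norm (a : ℂ) {z : ℂ} (hz : ‖z‖ < 1) :
    Summable fun p => ‖asc a (p + 1) / (p ! : ℂ) * z ^ p‖ := by
  apply summable_norm_of_ratio _ (fun p => (a + (1 + p)) / (1 + p)) _ _ hz
  · intro p
    have h3 : ((p ! : ℂ)) ≠ 0 := by exact_mod_cast p.factorial_ne_zero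
    have h4 : ((1 : ℂ) + p) ≠ 0 := by
      intro h
      have : ((p : ℂ) + 1) = 0 := by linear_combination h
      exact_mod_cast Nat.cast_add_one_ne_zero p this
    rw [asc_succ]
    have hfact : ((p + 1)! : ℂ) = (p ! : ℂ) * (1 + p) := by
      push_cast [Nat.factorial_succ]; ring
    rw [hfact]
    push_cast
    field_simp
    ring
  · have := (tendsto_shift_div (a + 1) 1).norm
    simp only [norm_one] at this ⊢
    apply this.congr
    intro p
    congr 1
    ring
lemma summable_shift_norm (co q : ℕ → ℂ)
    (hrec : ∀ p, co (p + 1) = q p * co p)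
    (hq : Tendsto (fun p => ‖q p‖) atTop (nhds 1))
    {z : ℂ} (hz : ‖z‖ < 1) :
    Summable fun p => ‖co (p + 1) * ((p : ℂ) + 1) * z ^ p‖ := by
  apply summable_norm_of_ratio _ (fun p => q (p + 1) * ((2 + p) / (1 + p))) _ _ hz
  · intro p
    have h4 : ((1 : ℂ) + p) ≠ 0 := by
      intro h
      have : ((p : ℂ) + 1) = 0 := by linear_combination h
      exact_mod_cast Nat.cast_add_one_ne_zero p this
    rw [hrec (p + 1)]
    push_cast
    field_simp
    ring
  · have h1 : Tendsto (fun p : ℕ => ‖q (p + 1)‖) atTop (nhds 1) :=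
      hq.comp (tendsto_add_atTop_nat 1)
    have h2 := (tendsto_shift_div 2 1).norm
    simp only [norm_one] at h2
    simpa using h1.mul h2

lemma hasDerivAt_powerSeries (co q : ℕ → ℂ)
    (hrec : ∀ p, co (p + 1) = q p * co p)
    (hq : Tendsto (fun p => ‖q p‖) atTop (nhds 1))
    {z : ℂ} (hz : ‖z‖ < 1) :
    HasDerivAt (fun w => ∑' p, co p * w ^ p)
      (∑' p, co (p + 1) * (((p : ℂ) + 1) * z ^ p)) z := by
  set r : ℝ := (1 + ‖z‖) / 2 with hr
  have hr1 : r < 1 := by rw [hr]; linarith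
  have hzr : ‖z‖ < r := by rw [hr]; linarith
  have hr0 : 0 < r := lt_of_le_of_lt (norm_nonneg z) hzr
  have hrnorm : ‖(r : ℂ)‖ = r := by
    simp [Complex.norm_real, abs_of_pos hr0]
  set u : ℕ → ℝ := fun n => ‖co n‖ * n * r ^ (n - 1) with hu
  have hu_sum : Summable u := by
    rw [← summable_nat_add_iff 1]
    have := summable_shift_norm co q hrec hq (z := (r : ℂ)) (by rwa [hrnorm])
    apply this.congr
    intro n
    rw [hu]
    simp only [Nat.add_sub_cancel]
    rw [norm_mul, norm_mul, norm_pow, hrnorm]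
    have h1 : ‖((n : ℂ) + 1)‖ = (n : ℝ) + 1 := by
      rw [show ((n : ℂ) + 1) = ((n + 1 : ℕ) : ℂ) by push_cast; ring, Complex.norm_natCast]
      push_cast; ring
    rw [h1]
    push_cast; ring
  have key := hasDerivAt_tsum_of_isPreconnected hu_sum (Metric.isOpen_ball (x := (0:ℂ)) (ε := r))
    ((convex_ball (0:ℂ) r).isPreconnected)
    (g := fun n w => co n * w ^ n) (g' := fun n w => co n * ((n : ℂ) * w ^ (n - 1)))
    (fun n w _ => (hasDerivAt_pow n w).const_mul (co n))
    ?_ (Metric.mem_ball_self hr0) ?_ (mem_ball_zero_iff.mpr hzr)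
  · -- convert derivative value
    refine key.congr_deriv (Eq.symm ?_)
    have hsum' : Summable fun n => co n * ((n : ℂ) * z ^ (n - 1)) := by
      apply Summable.of_norm_bounded hu_sum
      intro n
      rw [hu]
      simp only [norm_mul, norm_pow]
      have h1 : ‖(n : ℂ)‖ = (n : ℝ) := Complex.norm_natCast n
      rw [h1, ← mul_assoc]
      exact mul_le_mul_of_nonneg_left (pow_le_pow_left₀ (norm_nonneg z) hzr.le _) (by positivity)
    rw [Summable.tsum_eq_zero_add hsum']
    simp only [Nat.cast_zero, zero_mul, mul_zero, zero_add, Nat.add_sub_cancel]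
    apply tsum_congr
    intro p
    push_cast
    ring
  · intro n w hw
    replace hw : ‖w‖ < r := mem_ball_zero_iff.mp hw
    simp only [norm_mul, norm_pow, hu]
    rw [Complex.norm_natCast, ← mul_assoc]
    exact mul_le_mul_of_nonneg_left (pow_le_pow_left₀ (norm_nonneg w) hw.le _) (by positivity)
  · apply summable_of_ne_finset_zero (s := {0})
    intro p hp
    have : p ≠ 0 := by simpa using hp
    simp [zero_pow this]

lemma analyticOnNhd_powerSeries (co q : ℕ → ℂ)
    (hrec : ∀ p, co (p + 1) = q p * co p)
    (hq : Tendsto (fun p => ‖q p‖) atTop (nhds 1)) :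
    AnalyticOnNhd ℂ (fun w => ∑' p, co p * w ^ p) (Metric.ball (0 : ℂ) 1) := by
  apply DifferentiableOn.analyticOnNhd _ Metric.isOpen_ball
  intro w hw
  replace hw : ‖w‖ < 1 := mem_ball_zero_iff.mp hw
  exact (hasDerivAt_powerSeries co q hrec hq hw).differentiableAt.differentiableWithinAt
lemma binom_rec (a : ℂ) (p : ℕ) :
    asc a (p + 1) / ((p + 1)! : ℂ) = ((a + p) / (1 + p)) * (asc a p / (p ! : ℂ)) := by
  have h3 : ((p ! : ℂ)) ≠ 0 := by exact_mod_cast p.factorial_ne_zero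
  have h4 : ((1 : ℂ) + p) ≠ 0 := by
    intro h
    have : ((p : ℂ) + 1) = 0 := by linear_combination h
    exact_mod_cast Nat.cast_add_one_ne_zero p this
  rw [asc_succ]
  have hfact : ((p + 1)! : ℂ) = (p ! : ℂ) * (1 + p) := by
    push_cast [Nat.factorial_succ]; ring
  rw [hfact]
  field_simp

lemma binom_tendsto (a : ℂ) :
    Tendsto (fun p : ℕ => ‖(a + p) / (1 + p)‖) atTop (nhds 1) := by
  simpa using (tendsto_shift_div a 1).norm

lemma one_sub_mem_slitPlane {w : ℂ} (hw : ‖w‖ < 1) : 1 - w ∈ Complex.slitPlane := by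
  rw [Complex.mem_slitPlane_iff]
  left
  have := Complex.abs_re_le_norm w
  simp only [Complex.sub_re, Complex.one_re]
  have : |w.re| < 1 := lt_of_le_of_lt (Complex.abs_re_le_norm w) hw
  rw [abs_lt] at this
  linarith

lemma one_sub_ne_zero_of_norm_lt {w : ℂ} (hw : ‖w‖ < 1) : 1 - w ≠ 0 := by
  intro h
  have : w = 1 := by linear_combination -h
  rw [this] at hw; simp at hw

lemma hasSum_binomial (a : ℂ) {z : ℂ} (hz : ‖z‖ < 1) :
    HasSum (fun k => asc a k / (k ! : ℂ) * z ^ k) ((1 - z) ^ (-a)) := by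
  set co : ℕ → ℂ := fun k => asc a k / (k ! : ℂ) with hco
  set q : ℕ → ℂ := fun p => (a + p) / (1 + p) with hq
  have hrec : ∀ p, co (p + 1) = q p * co p := fun p => binom_rec a p
  have htend := binom_tendsto a
  set f : ℂ → ℂ := fun w => ∑' k, co k * w ^ k with hf
  -- the ODE: (1 - w) * D w = a * f w
  have hDsum : ∀ {w : ℂ}, ‖w‖ < 1 →
      Summable fun p => co (p + 1) * (((p : ℂ) + 1) * w ^ p) := by
    intro w hw
    have := (summable_shift_norm co q hrec htend hw).of_norm
    apply this.congr
    intro p; ring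
  have hode : ∀ {w : ℂ}, ‖w‖ < 1 →
      (1 - w) * (∑' p, co (p + 1) * (((p : ℂ) + 1) * w ^ p)) = a * f w := by
    intro w hw
    set D := ∑' p, co (p + 1) * (((p : ℂ) + 1) * w ^ p) with hD
    have hsum1 : Summable fun p => co (p + 1) * (((p : ℂ) + 1) * w ^ p) := hDsum hw
    have hsum2 : Summable fun p => co p * (p : ℂ) * w ^ p := by
      rw [← summable_nat_add_iff 1]
      have := hsum1.mul_left w
      apply this.congr
      intro p
      push_cast
      ring
    -- w * D = ∑' p, co p * p * w ^ p
    have hwD : w * D = ∑' p, co p * (p : ℂ) * w ^ p := by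
      rw [Summable.tsum_eq_zero_add hsum2]
      simp only [Nat.cast_zero, mul_zero, zero_mul, zero_add]
      rw [hD, ← tsum_mul_left]
      apply tsum_congr
      intro p
      push_cast
      ring
    have hsumf : Summable fun p => co p * w ^ p := (summable_binom_norm a hw).of_norm
    have expand : (1 - w) * D = D - w * D := by ring
    rw [expand, hwD]
    rw [hD]
    rw [← Summable.tsum_sub hsum1 hsum2]
    rw [hf, ← tsum_mul_left]
    apply tsum_congr
    intro p
    have h3 : ((p ! : ℂ)) ≠ 0 := by exact_mod_cast p.factorial_ne_zero
    have hfact : ((p + 1)! : ℂ) = (p ! : ℂ) * ((p : ℂ) + 1) := by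
      push_cast [Nat.factorial_succ]; ring
    have h4 : ((p : ℂ) + 1) ≠ 0 := Nat.cast_add_one_ne_zero p
    have hcop : co (p + 1) * ((p : ℂ) + 1) = asc a (p + 1) / (p ! : ℂ) := by
      simp only [hco]
      rw [hfact]
      field_simp
    have hkey : co (p + 1) * ((p : ℂ) + 1) = (a + p) * co p := by
      rw [hcop, asc_succ]
      simp only [hco]
      ring
    linear_combination w ^ p * hkey
  -- φ is constant on the unit ball
  have hderiv : ∀ w ∈ Metric.ball (0 : ℂ) 1,
      HasDerivAt (fun w => (1 - w) ^ a * f w) 0 w := by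
    intro w hw
    replace hw : ‖w‖ < 1 := mem_ball_zero_iff.mp hw
    have h1w : (1 : ℂ) - w ≠ 0 := one_sub_ne_zero_of_norm_lt hw
    have hsub : HasDerivAt (fun w : ℂ => 1 - w) (-1) w := (hasDerivAt_id w).const_sub 1
    have h1 : HasDerivAt (fun w : ℂ => (1 - w) ^ a) (a * (1 - w) ^ (a - 1) * -1) w :=
      hsub.cpow_const (one_sub_mem_slitPlane hw)
    have h2 : HasDerivAt f (∑' p, co (p + 1) * (((p : ℂ) + 1) * w ^ p)) w :=
      hasDerivAt_powerSeries co q hrec htend hw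
    have := h1.mul h2
    refine this.congr_deriv (Eq.symm ?_)
    have hpow : (1 - w) ^ (a - 1) * (1 - w) = (1 - w) ^ a := by
      rw [Complex.cpow_sub _ _ h1w, Complex.cpow_one]
      field_simp
    have := hode hw
    calc (0 : ℂ) = (1 - w) ^ (a - 1) *
          ((1 - w) * (∑' p, co (p + 1) * (((p : ℂ) + 1) * w ^ p)) - a * f w) := by
          rw [this]; ring
      _ = a * (1 - w) ^ (a - 1) * -1 * f w + (1 - w) ^ a * (∑' p, co (p+1) * (((p:ℂ)+1) * w ^ p)) := by
          rw [← hpow]; ring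
  have hdiff : DifferentiableOn ℂ (fun w => (1 - w) ^ a * f w) (Metric.ball (0:ℂ) 1) :=
    fun w hw => (hderiv w hw).differentiableAt.differentiableWithinAt
  have hzero : ∀ w ∈ Metric.ball (0:ℂ) 1,
      fderivWithin ℂ (fun w => (1 - w) ^ a * f w) (Metric.ball (0:ℂ) 1) w = 0 := by
    intro w hw
    rw [fderivWithin_of_isOpen Metric.isOpen_ball hw, (hderiv w hw).hasFDerivAt.fderiv]
    ext
    simp
  have hconst := (convex_ball (0:ℂ) 1).is_const_of_fderivWithin_eq_zero
    (f := fun w => (1 - w) ^ a * f w) hdiff hzero (mem_ball_zero_iff.mpr hz)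
    (mem_ball_zero_iff.mpr (by simp : ‖(0:ℂ)‖ < 1))
  have hf0 : f 0 = 1 := by
    simp only [hf]
    rw [tsum_eq_single 0 (fun k hk => by simp [zero_pow hk])]
    simp [hco, asc_zero]
  rw [hf0, sub_zero, Complex.one_cpow, mul_one] at hconst
  have h1z : (1 : ℂ) - z ≠ 0 := one_sub_ne_zero_of_norm_lt hz
  have hane : ((1 : ℂ) - z) ^ a ≠ 0 := by
    rw [Ne, Complex.cpow_eq_zero_iff]
    tauto
  have hfz : f z = (1 - z) ^ (-a) := by
    rw [Complex.cpow_neg]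
    field_simp
    linear_combination hconst
  simp only [hf, hco] at hfz
  have hs := ((summable_binom_norm a hz).of_norm).hasSum
  exact hfz ▸ hs
lemma vandermonde : ∀ (p : ℕ) (d c : ℂ),
    ∑ n ∈ Finset.range (p + 1),
      (-1 : ℂ) ^ n * (p.choose n : ℂ) * asc d n * asc (c + n) (p - n) = asc (c - d) p := by
  intro p
  induction p with
  | zero => intro d c; simp [asc_zero]
  | succ p IH =>
    intro d c
    have key : ∀ n, n ≤ p →
        (-1 : ℂ) ^ (n+1) * ((p+1).choose (n+1) : ℂ) * asc d (n+1) * asc (c + ((n:ℕ)+1 : ℕ)) (p + 1 - (n+1))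
        = (c - d) * ((-1 : ℂ) ^ n * (p.choose n : ℂ) * asc d n * asc ((c+1) + n) (p - n))
          - (((-1 : ℂ) ^ n * (p.choose n : ℂ) * asc d n * asc (c + n) (p + 1 - n))
            - ((-1 : ℂ) ^ (n+1) * (p.choose (n+1) : ℂ) * asc d (n+1) * asc (c + ((n:ℕ)+1 : ℕ)) (p + 1 - (n+1)))) := by
      intro n hn
      have hs1 : p + 1 - (n + 1) = p - n := by omega
      have hs2 : p + 1 - n = (p - n) + 1 := by omega
      rw [hs1, hs2]
      have hc1 : (c + (((n : ℕ) + 1 : ℕ) : ℂ)) = (c + n) + 1 := by push_cast; ring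
      rw [hc1]
      rw [asc_succ d n, asc_succ_left (c + n) (p - n)]
      have hc2 : ((c + 1) + (n : ℂ)) = (c + n) + 1 := by ring
      rw [hc2]
      have hch : (((p+1).choose (n+1) : ℕ) : ℂ) = (p.choose n : ℂ) + (p.choose (n+1) : ℂ) := by
        rw [Nat.choose_succ_succ]; push_cast; ring
      rw [hch]
      ring
    rw [Finset.sum_range_succ']
    have h0 : (-1 : ℂ) ^ 0 * ((p+1).choose 0 : ℂ) * asc d 0 * asc (c + (0:ℕ)) (p + 1 - 0) = asc c (p+1) := by
      simp [asc_zero]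
    rw [h0]
    rw [Finset.sum_congr rfl (fun n hn => key n (Nat.lt_succ_iff.mp (Finset.mem_range.mp hn)))]
    rw [Finset.sum_sub_distrib, ← Finset.mul_sum]
    have htele : ∑ n ∈ Finset.range (p+1),
        (((-1 : ℂ) ^ n * (p.choose n : ℂ) * asc d n * asc (c + n) (p + 1 - n))
          - ((-1 : ℂ) ^ (n+1) * (p.choose (n+1) : ℂ) * asc d (n+1) * asc (c + ((n:ℕ)+1 : ℕ)) (p + 1 - (n+1))))
        = asc c (p + 1) - 0 := by
      rw [Finset.sum_range_sub' (fun n => (-1 : ℂ) ^ n * (p.choose n : ℂ) * asc d n * asc (c + (n:ℕ)) (p + 1 - n))]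
      congr 1
      · simp [asc_zero]
      · simp [Nat.choose_succ_self]
    rw [htele, IH d (c + 1)]
    have : asc ((c + 1) - d) p = asc ((c - d) + 1) p := by congr 1; ring
    rw [this, ← asc_succ_left]
    ring
lemma asc_shift_ne_zero {c : ℂ} (hc : ∀ m : ℕ, c ≠ -(m : ℂ)) (n k : ℕ) : asc (c + n) k ≠ 0 := by
  apply asc_ne_zero
  intro m h
  apply hc (m + n)
  push_cast
  linear_combination h

lemma coeff_id {c : ℂ} (hc : ∀ m : ℕ, c ≠ -(m : ℂ)) (b : ℂ) (p : ℕ) :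
    ∑ n ∈ Finset.range (p + 1),
      (-1 : ℂ) ^ n * asc (c - b) n / (asc c n * (n ! : ℂ) * ((p - n)! : ℂ))
      = asc b p / (asc c p * (p ! : ℂ)) := by
  have hv := vandermonde p (c - b) c
  have hb : c - (c - b) = b := by ring
  rw [hb] at hv
  have hfacp : ((p ! : ℕ) : ℂ) ≠ 0 := by exact_mod_cast p.factorial_ne_zero
  have hden : asc c p * (p ! : ℂ) ≠ 0 := mul_ne_zero (asc_ne_zero hc p) hfacp
  have hterm : ∀ n ∈ Finset.range (p + 1),
      (-1 : ℂ) ^ n * asc (c - b) n / (asc c n * (n ! : ℂ) * ((p - n)! : ℂ))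
      = ((-1 : ℂ) ^ n * (p.choose n : ℂ) * asc (c - b) n * asc (c + n) (p - n))
          / (asc c p * (p ! : ℂ)) := by
    intro n hn
    have hnp : n ≤ p := Nat.lt_succ_iff.mp (Finset.mem_range.mp hn)
    have hsplit : asc c p = asc c n * asc (c + n) (p - n) := by
      rw [← asc_add c n (p - n)]
      congr 1
      omega
    have hfac : ((p ! : ℕ) : ℂ) = (p.choose n : ℂ) * (n ! : ℂ) * ((p - n)! : ℂ) := by
      rw [← Nat.choose_mul_factorial_mul_factorial hnp]
      push_cast
      ring
    have h1 : asc c n * (n ! : ℂ) * ((p - n)! : ℂ) ≠ 0 := by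
      refine mul_ne_zero (mul_ne_zero (asc_ne_zero hc n) ?_) ?_ <;>
        exact_mod_cast Nat.factorial_ne_zero _
    rw [div_eq_div_iff h1 hden, hsplit, hfac]
    ring
  rw [Finset.sum_congr rfl hterm, ← Finset.sum_div, hv]

-- real Pochhammer bounds
lemma ascR_nonneg {t : ℝ} (ht : 0 ≤ t) (p : ℕ) : 0 ≤ (ascPochhammer ℝ p).eval t := by
  induction p with
  | zero => simp
  | succ p ih =>
    rw [ascPochhammer_succ_eval]
    positivity

lemma ascR_mono {t t' : ℝ} (ht : 0 ≤ t) (htt : t ≤ t') (p : ℕ) :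
    (ascPochhammer ℝ p).eval t ≤ (ascPochhammer ℝ p).eval t' := by
  induction p with
  | zero => simp
  | succ p ih =>
    rw [ascPochhammer_succ_eval, ascPochhammer_succ_eval]
    have h1 : (0:ℝ) ≤ t + p := by positivity
    apply mul_le_mul ih (by linarith) h1 (ascR_nonneg (le_trans ht htt) p)

lemma norm_asc_le (x : ℂ) (p : ℕ) : ‖asc x p‖ ≤ (ascPochhammer ℝ p).eval ‖x‖ := by
  induction p with
  | zero => simp [asc_zero]
  | succ p ih =>
    rw [asc_succ, ascPochhammer_succ_eval, norm_mul]
    apply mul_le_mul ih _ (norm_nonneg _) (ascR_nonneg (norm_nonneg x) p)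
    calc ‖x + (p:ℂ)‖ ≤ ‖x‖ + ‖(p:ℂ)‖ := norm_add_le _ _
      _ = ‖x‖ + p := by rw [Complex.norm_natCast]

lemma asc_nat_le (m k : ℕ) : (ascPochhammer ℕ k).eval m ≤ 2 ^ (m + k) * k ! := by
  rw [ascPochhammer_nat_eq_ascFactorial, Nat.ascFactorial_eq_factorial_mul_choose']
  rcases Nat.eq_zero_or_pos (m + k) with h | h
  · obtain ⟨rfl, rfl⟩ : m = 0 ∧ k = 0 := by omega
    simp
  · have hch : (m + k - 1).choose k ≤ 2 ^ (m + k - 1) := by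
      calc (m + k - 1).choose k ≤ ∑ i ∈ Finset.range (m + k - 1 + 1), (m + k - 1).choose i := by
            rcases le_or_gt k (m + k - 1) with hk | hk
            · exact Finset.single_le_sum (fun i _ => Nat.zero_le _)
                (Finset.mem_range.mpr (by omega))
            · rw [Nat.choose_eq_zero_of_lt hk]; exact Nat.zero_le _
        _ = 2 ^ (m + k - 1) := Nat.sum_range_choose _
    calc k ! * (m + k - 1).choose k ≤ k ! * 2 ^ (m + k - 1) :=
          Nat.mul_le_mul_left _ hch
      _ ≤ 2 ^ (m + k) * k ! := by
          rw [Nat.mul_comm]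
          apply Nat.mul_le_mul_right
          exact Nat.pow_le_pow_right (by norm_num) (by omega)

lemma norm_asc_shift_le (a : ℂ) (n k : ℕ) :
    ‖asc (a + n) k‖ ≤ 2 ^ (⌈‖a‖⌉₊ + n + k) * k ! := by
  set A := ⌈‖a‖⌉₊ with hA
  calc ‖asc (a + n) k‖ ≤ (ascPochhammer ℝ k).eval ‖a + (n:ℂ)‖ := norm_asc_le _ k
    _ ≤ (ascPochhammer ℝ k).eval ((A + n : ℕ) : ℝ) := by
        apply ascR_mono (norm_nonneg _) _ k
        calc ‖a + (n:ℂ)‖ ≤ ‖a‖ + ‖(n:ℂ)‖ := norm_add_le _ _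
          _ ≤ (A : ℝ) + n := by
              rw [Complex.norm_natCast]
              have := Nat.le_ceil ‖a‖
              push_cast
              linarith
          _ = ((A + n : ℕ) : ℝ) := by push_cast; ring
    _ = (((ascPochhammer ℕ k).eval (A + n) : ℕ) : ℝ) := by
        rw [ascPochhammer_eval_cast]
    _ ≤ 2 ^ (A + n + k) * k ! := by
        have := asc_nat_le (A + n) k
        exact_mod_cast this
lemma pfaff_small (a b c : ℂ) (hc : ∀ m : ℕ, c ≠ -(m : ℂ)) {z : ℂ} (hz2 : ‖z‖ < 1/2) :
    (∑' p : ℕ, asc a p * asc b p / (asc c p * (p ! : ℂ)) * z ^ p)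
      = (1 - z) ^ (-a) *
        ∑' p : ℕ, asc a p * asc (c - b) p / (asc c p * (p ! : ℂ)) * (z / (z - 1)) ^ p := by
  have hz : ‖z‖ < 1 := by linarith
  have hz1 : (1 : ℂ) - z ≠ 0 := one_sub_ne_zero_of_norm_lt hz
  have hzm1 : z - 1 ≠ 0 := fun h => hz1 (by linear_combination -h)
  set w := z / (z - 1) with hwdef
  set x := ‖z‖ with hx
  have hx0 : 0 ≤ x := norm_nonneg z
  set A := ⌈‖a‖⌉₊ with hA
  set F : ℕ × ℕ → ℂ := fun nk =>
    (asc a nk.1 * asc (c - b) nk.1 / (asc c nk.1 * (nk.1 ! : ℂ)) * (-1 : ℂ) ^ nk.1 * z ^ nk.1)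
      * (asc (a + nk.1) nk.2 / (nk.2 ! : ℂ) * z ^ nk.2) with hF
  -- summability of the double family
  set g : ℕ → ℝ := fun n =>
    ‖asc a n * asc (c - b) n / (asc c n * (n ! : ℂ)) * (((2 * x : ℝ) : ℂ)) ^ n‖ with hg
  set h : ℕ → ℝ := fun k => (2 * x) ^ k with hh
  have h2x : ‖((2 * x : ℝ) : ℂ)‖ < 1 := by
    rw [Complex.norm_real, Real.norm_of_nonneg (by positivity)]
    linarith
  have hgsum : Summable g := summable_hyper_norm a (c - b) c hc h2x
  have hhsum : Summable h := summable_geometric_of_lt_one (by positivity) (by linarith)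
  have hmaj : Summable fun nk : ℕ × ℕ => (2 : ℝ) ^ A * (g nk.1 * h nk.2) :=
    (hgsum.mul_of_nonneg hhsum (fun n => norm_nonneg _) (fun k => by positivity)).mul_left _
  have hFnorm : Summable fun nk => ‖F nk‖ := by
    apply Summable.of_nonneg_of_le (fun _ => norm_nonneg _) _ hmaj
    rintro ⟨n, k⟩
    have hkpos : (0 : ℝ) < ((k ! : ℕ) : ℝ) := by exact_mod_cast Nat.factorial_pos k
    have hb2 : ‖asc (a + n) k‖ / ((k ! : ℕ) : ℝ) ≤ 2 ^ (A + n + k) := by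
      rw [div_le_iff₀ hkpos]
      exact norm_asc_shift_le a n k
    have hgn : g n = ‖asc a n * asc (c - b) n / (asc c n * (n ! : ℂ))‖ * (2 * x) ^ n := by
      simp only [hg]
      rw [norm_mul, norm_pow, Complex.norm_real, Real.norm_of_nonneg (by positivity)]
    have hP : ‖asc a n * asc (c - b) n / (asc c n * (n ! : ℂ)) * (-1 : ℂ) ^ n * z ^ n‖
        = ‖asc a n * asc (c - b) n / (asc c n * (n ! : ℂ))‖ * x ^ n := by
      rw [norm_mul, norm_mul, norm_pow, norm_pow]
      simp [hx]
    have hS : ‖asc (a + n) k / ((k ! : ℕ) : ℂ) * z ^ k‖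
        = ‖asc (a + n) k‖ / ((k ! : ℕ) : ℝ) * x ^ k := by
      rw [norm_mul, norm_div, Complex.norm_natCast, norm_pow]
    have hFval : ‖F (n, k)‖ = ‖asc a n * asc (c - b) n / (asc c n * (n ! : ℂ))‖ * x ^ n
        * (‖asc (a + n) k‖ / ((k ! : ℕ) : ℝ) * x ^ k) := by
      simp only [hF]
      rw [norm_mul, hP, hS]
    rw [hFval, hgn, hh]
    calc ‖asc a n * asc (c - b) n / (asc c n * (n ! : ℂ))‖ * x ^ n
          * (‖asc (a + n) k‖ / ((k ! : ℕ) : ℝ) * x ^ k)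
        ≤ ‖asc a n * asc (c - b) n / (asc c n * (n ! : ℂ))‖ * x ^ n
          * ((2 : ℝ) ^ (A + n + k) * x ^ k) := by
          apply mul_le_mul_of_nonneg_left
            (mul_le_mul_of_nonneg_right hb2 (by positivity)) (by positivity)
      _ = (2 : ℝ) ^ A * (‖asc a n * asc (c - b) n / (asc c n * (n ! : ℂ))‖ * (2 * x) ^ n
          * (2 * x) ^ k) := by ring
  have hFsum : Summable F := hFnorm.of_norm
  -- fiberwise summability
  have hfiber : ∀ n : ℕ, Summable fun k => F (n, k) := by
    intro n
    have := ((summable_binom_norm (a + n) hz).of_norm).mul_left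
      (asc a n * asc (c - b) n / (asc c n * (n ! : ℂ)) * (-1 : ℂ) ^ n * z ^ n)
    exact this.congr fun k => by simp only [hF]
  -- the right-hand side as a double sum
  have hrhs : (1 - z) ^ (-a) *
      (∑' p : ℕ, asc a p * asc (c - b) p / (asc c p * (p ! : ℂ)) * w ^ p)
      = ∑' n : ℕ, ∑' k : ℕ, F (n, k) := by
    rw [← tsum_mul_left]
    apply tsum_congr
    intro n
    have hbin := hasSum_binomial (a + n) hz
    have h4 : ((-1 : ℂ) ^ n)⁻¹ = (-1 : ℂ) ^ n := by
      rw [← inv_pow]; norm_num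
    have h1 : ((1 : ℂ) - z) ^ (-(a + (n : ℂ))) = (1 - z) ^ (-a) * (((1 - z) ^ n : ℂ))⁻¹ := by
      rw [show -(a + (n : ℂ)) = -a + -(n : ℂ) by ring]
      rw [Complex.cpow_add _ _ hz1, Complex.cpow_neg, Complex.cpow_neg, Complex.cpow_natCast]
    have h2 : w ^ n = z ^ n * ((-1 : ℂ) ^ n * (((1 - z) ^ n : ℂ))⁻¹) := by
      calc w ^ n = z ^ n / ((-1 : ℂ) ^ n * (1 - z) ^ n) := by
            rw [hwdef, div_pow, show (z - 1) = -(1 - z) by ring, neg_pow]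
        _ = z ^ n * ((-1 : ℂ) ^ n * (((1 - z) ^ n : ℂ))⁻¹) := by
            rw [div_eq_mul_inv, mul_inv, h4]
    have hpow : (1 - z) ^ (-a) * w ^ n = (-1 : ℂ) ^ n * z ^ n * (1 - z) ^ (-(a + (n : ℂ))) := by
      rw [h2, h1]; ring
    calc (1 - z) ^ (-a) * (asc a n * asc (c - b) n / (asc c n * (n ! : ℂ)) * w ^ n)
        = (asc a n * asc (c - b) n / (asc c n * (n ! : ℂ)) * (-1 : ℂ) ^ n * z ^ n)
          * (1 - z) ^ (-(a + (n : ℂ))) := by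
          linear_combination (asc a n * asc (c - b) n / (asc c n * (n ! : ℂ))) * hpow
      _ = (asc a n * asc (c - b) n / (asc c n * (n ! : ℂ)) * (-1 : ℂ) ^ n * z ^ n)
          * ∑' k, asc (a + n) k / (k ! : ℂ) * z ^ k := by rw [hbin.tsum_eq]
      _ = ∑' k, F (n, k) := by
          rw [← tsum_mul_left]
  -- reindex the double sum along antidiagonals
  have hdiag : ∑' nk : ℕ × ℕ, F nk = ∑' p : ℕ, ∑ kl ∈ Finset.HasAntidiagonal.antidiagonal p, F kl := by
    rw [← Finset.HasAntidiagonal.sigmaAntidiagonalEquivProd.tsum_eq F]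
    have hsig : Summable fun x : (Σ p : ℕ, {x // x ∈ Finset.HasAntidiagonal.antidiagonal p}) =>
        F (Finset.HasAntidiagonal.sigmaAntidiagonalEquivProd x) :=
      Finset.HasAntidiagonal.sigmaAntidiagonalEquivProd.summable_iff.mpr hFsum
    rw [Summable.tsum_sigma' (fun p => (hasSum_fintype _).summable) hsig]
    apply tsum_congr
    intro p
    exact Finset.tsum_subtype (Finset.HasAntidiagonal.antidiagonal p) F
  -- each antidiagonal sum is the hypergeometric coefficient
  have hdiagp : ∀ p : ℕ, ∑ kl ∈ Finset.HasAntidiagonal.antidiagonal p, F kl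
      = asc a p * asc b p / (asc c p * (p ! : ℂ)) * z ^ p := by
    intro p
    rw [Finset.Nat.sum_antidiagonal_eq_sum_range_succ_mk]
    have hterm : ∀ n ∈ Finset.range (p + 1), F (n, p - n)
        = (asc a p * z ^ p) *
          ((-1 : ℂ) ^ n * asc (c - b) n / (asc c n * (n ! : ℂ) * (((p - n)! : ℕ) : ℂ))) := by
      intro n hn
      have hnp : n ≤ p := Nat.lt_succ_iff.mp (Finset.mem_range.mp hn)
      have hz_split : z ^ n * z ^ (p - n) = z ^ p := by rw [← pow_add]; congr 1; omega
      have hasc : asc a n * asc (a + n) (p - n) = asc a p := by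
        rw [← asc_add]; congr 1; omega
      calc F (n, p - n)
          = (asc a n * asc (a + n) (p - n)) * ((z ^ n * z ^ (p - n)) *
            ((-1 : ℂ) ^ n * asc (c - b) n / (asc c n * (n ! : ℂ) * (((p - n)! : ℕ) : ℂ)))) := by
            simp only [hF]
            ring
        _ = (asc a p * z ^ p) *
            ((-1 : ℂ) ^ n * asc (c - b) n / (asc c n * (n ! : ℂ) * (((p - n)! : ℕ) : ℂ))) := by
            rw [hasc, hz_split]; ring
    rw [Finset.sum_congr rfl hterm, ← Finset.mul_sum, coeff_id hc b p]
    ring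
  calc (∑' p : ℕ, asc a p * asc b p / (asc c p * (p ! : ℂ)) * z ^ p)
      = ∑' p : ℕ, ∑ kl ∈ Finset.HasAntidiagonal.antidiagonal p, F kl := by
        exact tsum_congr fun p => (hdiagp p).symm
    _ = ∑' nk : ℕ × ℕ, F nk := hdiag.symm
    _ = ∑' n : ℕ, ∑' k : ℕ, F (n, k) := Summable.tsum_prod' hFsum hfiber
    _ = (1 - z) ^ (-a) *
        ∑' p : ℕ, asc a p * asc (c - b) p / (asc c p * (p ! : ℂ)) * w ^ p := hrhs.symm
lemma hyper_rec (a b c : ℂ) (hc : ∀ m : ℕ, c ≠ -(m : ℂ)) (p : ℕ) :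
    asc a (p+1) * asc b (p+1) / (asc c (p+1) * ((p+1)! : ℂ))
      = ((a + p) / (1 + p) * ((b + p) / (c + p)))
        * (asc a p * asc b p / (asc c p * (p ! : ℂ))) := by
  have h1 : asc c p ≠ 0 := asc_ne_zero hc p
  have h2 : (c + p) ≠ 0 := fun h => hc p (by linear_combination h)
  have h3 : ((p ! : ℂ)) ≠ 0 := by exact_mod_cast p.factorial_ne_zero
  have h4 : ((1 : ℂ) + p) ≠ 0 := by
    intro h
    have : ((p : ℂ) + 1) = 0 := by linear_combination h
    exact_mod_cast Nat.cast_add_one_ne_zero p this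
  rw [asc_succ, asc_succ, asc_succ]
  have hfact : ((p + 1)! : ℂ) = (p ! : ℂ) * (1 + p) := by
    push_cast [Nat.factorial_succ]; ring
  rw [hfact]
  field_simp

lemma hyper_tendsto (a b c : ℂ) :
    Tendsto (fun p : ℕ => ‖(a + p) / (1 + p) * ((b + p) / (c + p))‖) atTop (nhds 1) := by
  have h1 := tendsto_shift_div a 1
  have h2 := tendsto_shift_div b c
  simpa using (h1.mul h2).norm

lemma analyticOnNhd_hyper (a b c : ℂ) (hc : ∀ m : ℕ, c ≠ -(m : ℂ)) :
    AnalyticOnNhd ℂ (fun w => ∑' p : ℕ, asc a p * asc b p / (asc c p * (p ! : ℂ)) * w ^ p)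
      (Metric.ball (0 : ℂ) 1) :=
  analyticOnNhd_powerSeries _ _ (hyper_rec a b c hc) (hyper_tendsto a b c)

lemma re_lt_half_iff {z : ℂ} (hzm1 : z - 1 ≠ 0) : ‖z / (z - 1)‖ < 1 ↔ z.re < 1/2 := by
  rw [norm_div, div_lt_one (norm_pos_iff.mpr hzm1)]
  have key : Complex.normSq (z - 1) - Complex.normSq z = 1 - 2 * z.re := by
    simp [Complex.normSq_apply, Complex.sub_re, Complex.sub_im]
    ring
  have e1 : ‖z‖ ^ 2 = Complex.normSq z := by
    exact Complex.sq_norm _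
  have e2 : ‖z - 1‖ ^ 2 = Complex.normSq (z - 1) := by
    exact Complex.sq_norm _
  constructor
  · intro h
    have := pow_lt_pow_left₀ h (norm_nonneg z) (two_ne_zero)
    rw [e1, e2] at this
    linarith
  · intro h
    have hsq : ‖z‖ ^ 2 < ‖z - 1‖ ^ 2 := by rw [e1, e2]; linarith
    nlinarith [norm_nonneg z, norm_nonneg (z - 1), norm_pos_iff.mpr hzm1]

theorem pfaff_transformation' (a b c z : ℂ)
    (hc : ∀ m : ℕ, c ≠ -(m : ℂ)) (hz : ‖z‖ < 1) (hz' : ‖z / (z - 1)‖ < 1) :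
    (∑' p : ℕ, asc a p * asc b p / (asc c p * (p ! : ℂ)) * z ^ p)
      = (1 - z) ^ (-a) *
        ∑' p : ℕ, asc a p * asc (c - b) p / (asc c p * (p ! : ℂ)) * (z / (z - 1)) ^ p := by
  have hzm1 : z - 1 ≠ 0 := fun h => (one_sub_ne_zero_of_norm_lt hz) (by linear_combination -h)
  set U : Set ℂ := Metric.ball (0 : ℂ) 1 ∩ {w : ℂ | w.re < 1/2} with hU
  have hUopen : IsOpen U :=
    Metric.isOpen_ball.inter (isOpen_lt Complex.continuous_re continuous_const)
  have hUconv : Convex ℝ U := (convex_ball (0:ℂ) 1).inter (convex_halfSpace_re_lt (1/2))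
  set f : ℂ → ℂ := fun w => ∑' p : ℕ, asc a p * asc b p / (asc c p * (p ! : ℂ)) * w ^ p with hf
  set g : ℂ → ℂ := fun w => (1 - w) ^ (-a) *
    ∑' p : ℕ, asc a p * asc (c - b) p / (asc c p * (p ! : ℂ)) * (w / (w - 1)) ^ p with hg
  have hfa : AnalyticOnNhd ℂ f U :=
    (analyticOnNhd_hyper a b c hc).mono (Set.inter_subset_left)
  have hga : AnalyticOnNhd ℂ g U := by
    apply AnalyticOnNhd.mul
    · apply AnalyticOnNhd.cpow (analyticOnNhd_const.sub analyticOnNhd_id) analyticOnNhd_const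
      intro w hw
      exact one_sub_mem_slitPlane (mem_ball_zero_iff.mp hw.1)
    · intro w hw
      have hw1 : ‖w‖ < 1 := mem_ball_zero_iff.mp hw.1
      have hwm1 : w - 1 ≠ 0 :=
        fun h => (one_sub_ne_zero_of_norm_lt hw1) (by linear_combination -h)
      have hwin : ‖w / (w - 1)‖ < 1 := (re_lt_half_iff hwm1).mpr hw.2
      have hH : AnalyticAt ℂ
          (fun u => ∑' p : ℕ, asc a p * asc (c - b) p / (asc c p * (p ! : ℂ)) * u ^ p)
          (w / (w - 1)) :=
        analyticOnNhd_hyper a (c - b) c hc _ (mem_ball_zero_iff.mpr hwin)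
      have hdiv : AnalyticAt ℂ (fun u : ℂ => u / (u - 1)) w :=
        (analyticAt_id).div ((analyticAt_id).sub analyticAt_const) hwm1
      exact AnalyticAt.comp (f := fun u : ℂ => u / (u - 1)) hH hdiv
  have h0U : (0 : ℂ) ∈ U := by
    constructor
    · exact mem_ball_zero_iff.mpr (by norm_num)
    · simp only [Set.mem_setOf_eq, Complex.zero_re]
      norm_num
  have hzU : z ∈ U := ⟨mem_ball_zero_iff.mpr hz, (re_lt_half_iff hzm1).mp hz'⟩
  have hev : f =ᶠ[nhds (0 : ℂ)] g := by
    apply Filter.eventuallyEq_of_mem (Metric.ball_mem_nhds (0:ℂ) (show (0:ℝ) < 1/2 by norm_num))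
    intro w hw
    exact pfaff_small a b c hc (mem_ball_zero_iff.mp hw)
  exact hfa.eqOn_of_preconnected_of_eventuallyEq hga hUconv.isPreconnected h0U hev hzU

theorem pfaff_transformation (a b c z : ℂ)
    (hc : ∀ m : ℕ, c ≠ -(m : ℂ)) (hz : ‖z‖ < 1) (hz' : ‖z / (z - 1)‖ < 1) :
    hyperSeries a b c z = (1 - z) ^ (-a) * hyperSeries a (c - b) c (z / (z - 1)) :=
  pfaff_transformation' a b c z hc hz hz'
end
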